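/- arXiv:1309.5996 — 2 statements merged into one kernel-verified Lean document; each statement's English description precedes it below -/
import Mathlib

section
/- Let f : S → E be a strictly increasing function from a set S of epsilon numbers into the epsilon numbers, and let x, y be ordinals with Ep(x) ∪ Ep(y) ⊆ S. Then Ep(x · y) ⊆ S and (x · y)[f] = x[f] · y[f]. -/
open Ordinal

/-- An ordinal is an epsilon number if it is a fixed point of `ω ^ ·`. -/
def IsEpsilon (x : Ordinal.{0}) : Prop := ω ^ x = x

theorem cnf_fst_lt {x : Ordinal.{0}} (h : ¬ ω ^ x = x) {p : Ordinal × Ordinal}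
    (hp : p ∈ CNF ω x) : p.1 < x := by
  have hx : x ≠ 0 := by
    rintro rfl
    simp [Ordinal.CNF.zero_right] at hp
  have h1 : p.1 ≤ Ordinal.log ω x := Ordinal.CNF.fst_le_log hp
  have h2 : Ordinal.log ω x < x := by
    rcases lt_or_eq_of_le (Ordinal.log_le_self ω x) with h' | h'
    · exact h'
    · exfalso
      have hle := Ordinal.opow_log_le_self ω hx
      rw [h'] at hle
      exact h (le_antisymm hle (Ordinal.right_le_opow x one_lt_omega0))
  exact lt_of_le_of_lt h1 h2

open scoped Classical in
/-- The set of epsilon numbers occurring hereditarily in the Cantor normal form of `x`. -/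
noncomputable def Ep (x : Ordinal.{0}) : Set Ordinal.{0} :=
  if h : ω ^ x = x then {x}
  else ⋃ p : {q // q ∈ CNF ω x}, Ep p.1.1
termination_by x
decreasing_by exact cnf_fst_lt h p.2

open scoped Classical in
/-- Simultaneous substitution of the epsilon numbers occurring hereditarily in the
Cantor normal form of `x` by their values under `f`. -/
noncomputable def subst (f : Ordinal.{0} → Ordinal.{0}) (x : Ordinal.{0}) : Ordinal.{0} :=
  if h : ω ^ x = x then f x
  else (((CNF ω x).attach).map (fun p => ω ^ subst f p.1.1 * p.1.2)).sum
termination_by x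
decreasing_by exact cnf_fst_lt h p.2
open Ordinal List Set

theorem isEpsilon_ne_zero {e : Ordinal.{0}} (h : IsEpsilon e) : e ≠ 0 := by
  rintro rfl; rw [IsEpsilon, opow_zero] at h; exact one_ne_zero h

theorem isEpsilon_pos {e : Ordinal.{0}} (h : IsEpsilon e) : 0 < e :=
  pos_iff_ne_zero.2 (isEpsilon_ne_zero h)

theorem Ep_zero : Ep 0 = ∅ := by
  rw [Ep]; simp [omega0_ne_zero]

theorem subst_noneps (f : Ordinal.{0} → Ordinal.{0}) {x : Ordinal.{0}} (h : ¬ ω ^ x = x) :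
    subst f x = ((CNF ω x).map (fun p => ω ^ subst f p.1 * p.2)).sum := by
  rw [subst, dif_neg h, List.attach_map_val (l := CNF ω x) (f := fun q => ω ^ subst f q.1 * q.2)]

theorem subst_zero (f : Ordinal.{0} → Ordinal.{0}) : subst f 0 = 0 := by
  rw [subst_noneps f (by rw [opow_zero]; exact one_ne_zero), Ordinal.CNF.zero_right]; rfl

theorem Ep_eps {e : Ordinal.{0}} (h : IsEpsilon e) : Ep e = {e} := by
  rw [Ep, dif_pos (show ω ^ e = e from h)]

theorem subst_eps (f : Ordinal.{0} → Ordinal.{0}) {e : Ordinal.{0}} (h : IsEpsilon e) :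
    subst f e = f e := by
  rw [subst, dif_pos (show ω ^ e = e from h)]

theorem CNF_eps {e : Ordinal.{0}} (h : IsEpsilon e) : CNF ω e = [(e, 1)] := by
  have he := isEpsilon_ne_zero h
  rw [Ordinal.CNF.ne_zero he]
  have hl : Ordinal.log ω e = e := by
    conv_lhs => rw [← h]
    exact Ordinal.log_opow one_lt_omega0 e
  rw [hl, h, Ordinal.div_self he, Ordinal.mod_self, Ordinal.CNF.zero_right]

/-- Uniform description of `Ep` as union over the CNF. -/
theorem Ep_eq_biUnion (z : Ordinal.{0}) : Ep z = ⋃ p ∈ CNF ω z, Ep p.1 := by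
  by_cases h : IsEpsilon z
  · rw [Ep_eps h, CNF_eps h]
    simp [Ep_eps h]
  · rw [Ep, dif_neg (show ¬ ω ^ z = z from h), Set.iUnion_subtype]
theorem log_decomp {a c r : Ordinal.{0}} (hc : c ≠ 0) (hcw : c < ω) (hr : r < ω ^ a) :
    Ordinal.log ω (ω ^ a * c + r) = a := by
  rw [Ordinal.log_opow_mul_add one_lt_omega0 hc hr, Ordinal.log_eq_zero hcw, add_zero]

theorem div_decomp {a c r : Ordinal.{0}} (hr : r < ω ^ a) :
    (ω ^ a * c + r) / ω ^ a = c := by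
  rw [Ordinal.mul_add_div _ (opow_ne_zero _ omega0_ne_zero),
    Ordinal.div_eq_zero_of_lt hr, add_zero]

theorem mod_decomp {a c r : Ordinal.{0}} (hr : r < ω ^ a) :
    (ω ^ a * c + r) % ω ^ a = r := by
  rw [Ordinal.mul_add_mod_self, Ordinal.mod_eq_of_lt hr]

theorem decomp_ne_zero {a c r : Ordinal.{0}} (hc : c ≠ 0) : ω ^ a * c + r ≠ 0 :=
  (Ordinal.opow_mul_add_pos omega0_ne_zero a hc r).ne'

theorem Ep_cons {z : Ordinal.{0}} (hz : z ≠ 0) :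
    Ep z = Ep (Ordinal.log ω z) ∪ Ep (z % ω ^ Ordinal.log ω z) := by
  rw [Ep_eq_biUnion z, Ordinal.CNF.ne_zero hz, Ep_eq_biUnion (z % ω ^ Ordinal.log ω z)]
  ext u
  simp only [List.mem_cons, Set.mem_iUnion, Set.mem_union]
  constructor
  · rintro ⟨p, hp | hp, hu⟩
    · subst hp; exact Or.inl hu
    · exact Or.inr ⟨p, hp, hu⟩
  · rintro (hu | ⟨p, hp, hu⟩)
    · exact ⟨_, Or.inl rfl, hu⟩
    · exact ⟨p, Or.inr hp, hu⟩

theorem Ep_log_subset (z : Ordinal.{0}) : Ep (Ordinal.log ω z) ⊆ Ep z := by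
  rcases eq_or_ne z 0 with rfl | hz
  · rw [Ordinal.log_zero_right]
  · rw [Ep_cons hz]; exact Set.subset_union_left

theorem Ep_mod_subset (z : Ordinal.{0}) : Ep (z % ω ^ Ordinal.log ω z) ⊆ Ep z := by
  rcases eq_or_ne z 0 with rfl | hz
  · rw [Ordinal.zero_mod]
  · rw [Ep_cons hz]; exact Set.subset_union_right

theorem Ep_decomp {a c r : Ordinal.{0}} (hc : c ≠ 0) (hcw : c < ω) (hr : r < ω ^ a) :
    Ep (ω ^ a * c + r) = Ep a ∪ Ep r := by
  rw [Ep_cons (decomp_ne_zero hc), log_decomp hc hcw hr, mod_decomp hr]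

theorem Ep_opow_subset (a : Ordinal.{0}) : Ep (ω ^ a) ⊆ Ep a := by
  have h : Ep (ω ^ a * 1 + 0) = Ep a ∪ Ep 0 :=
    Ep_decomp one_ne_zero one_lt_omega0 (opow_pos a omega0_pos)
  rw [mul_one, add_zero, Ep_zero, Set.union_empty] at h
  exact h.subset

section main

variable {S : Set Ordinal.{0}} {f : Ordinal → Ordinal}

theorem mem_S_of_eps (hz : Ep z ⊆ S) (h : IsEpsilon z) : z ∈ S :=
  hz (by rw [Ep_eps h]; exact Set.mem_singleton z)

theorem subst_eq_sum (hfE : ∀ e ∈ S, IsEpsilon (f e)) {z : Ordinal.{0}} (hz : Ep z ⊆ S) :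
    subst f z = ((CNF ω z).map (fun p => ω ^ subst f p.1 * p.2)).sum := by
  by_cases h : ω ^ z = z
  · rw [subst_eps f h, CNF_eps h]
    simp only [List.map_cons, List.map_nil, List.sum_cons, List.sum_nil, add_zero, mul_one]
    rw [subst_eps f h]
    exact (hfE z (mem_S_of_eps hz h)).symm
  · exact subst_noneps f h

theorem subst_cons (hfE : ∀ e ∈ S, IsEpsilon (f e)) {z : Ordinal.{0}} (hz : z ≠ 0)
    (hzS : Ep z ⊆ S) :
    subst f z = ω ^ subst f (Ordinal.log ω z) * (z / ω ^ Ordinal.log ω z)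
      + subst f (z % ω ^ Ordinal.log ω z) := by
  rw [subst_eq_sum hfE hzS, Ordinal.CNF.ne_zero hz, List.map_cons, List.sum_cons]
  congr 1
  exact (subst_eq_sum hfE ((Ep_mod_subset z).trans hzS)).symm

theorem subst_decomp (hfE : ∀ e ∈ S, IsEpsilon (f e)) {a c r : Ordinal.{0}} (hc : c ≠ 0)
    (hcw : c < ω) (hr : r < ω ^ a) (hEa : Ep a ⊆ S) (hEr : Ep r ⊆ S) :
    subst f (ω ^ a * c + r) = ω ^ subst f a * c + subst f r := by
  have hz : Ep (ω ^ a * c + r) ⊆ S := by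
    rw [Ep_decomp hc hcw hr]; exact Set.union_subset hEa hEr
  rw [subst_cons hfE (decomp_ne_zero hc) hz, log_decomp hc hcw hr, div_decomp hr, mod_decomp hr]

theorem subst_opow (hfE : ∀ e ∈ S, IsEpsilon (f e)) {a : Ordinal.{0}} (hEa : Ep a ⊆ S) :
    subst f (ω ^ a) = ω ^ subst f a := by
  have h := subst_decomp hfE one_ne_zero one_lt_omega0 (opow_pos a omega0_pos) hEa
    (by rw [Ep_zero]; exact Set.empty_subset S)
  rwa [mul_one, add_zero, mul_one, subst_zero, add_zero] at h

theorem subst_pos (hfE : ∀ e ∈ S, IsEpsilon (f e)) {z : Ordinal.{0}} (hz : z ≠ 0)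
    (hzS : Ep z ⊆ S) : 0 < subst f z := by
  rw [subst_cons hfE hz hzS]
  exact lt_of_lt_of_le
    (mul_pos (opow_pos _ omega0_pos) (Ordinal.div_opow_log_pos ω hz)) (le_self_add)

theorem subst_nat (hfE : ∀ e ∈ S, IsEpsilon (f e)) {z : Ordinal.{0}} (hz : z ≠ 0)
    (hzw : z < ω) : subst f z = z := by
  have h := subst_decomp (a := 0) hfE hz hzw (by rw [opow_zero]; exact zero_lt_one)
    (by rw [Ep_zero]; exact Set.empty_subset S) (by rw [Ep_zero]; exact Set.empty_subset S)
  rwa [opow_zero, one_mul, add_zero, subst_zero, opow_zero, one_mul, add_zero] at h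

end main
theorem log_lt_self_of_noneps {x : Ordinal.{0}} (h : ¬ ω ^ x = x) (hx : x ≠ 0) :
    Ordinal.log ω x < x := by
  rcases lt_or_eq_of_le (Ordinal.log_le_self ω x) with h' | h'
  · exact h'
  · exfalso
    have hle := Ordinal.opow_log_le_self ω hx
    rw [h'] at hle
    exact h (le_antisymm hle (Ordinal.right_le_opow x one_lt_omega0))

theorem opow_mul_add_lt {u c v w : Ordinal.{0}} (hc : c < ω) (hv : v < ω ^ u) (huw : u < w) :
    ω ^ u * c + v < ω ^ w :=
  lt_of_lt_of_le (Ordinal.opow_mul_add_lt_opow (x := Order.succ u) hc hv (Order.lt_succ u))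
    (Ordinal.opow_le_opow_right omega0_pos (Order.succ_le_of_lt huw))

theorem opow_mul_lt_opow {u c w : Ordinal.{0}} (hc : c < ω) (huw : u < w) :
    ω ^ u * c < ω ^ w := by
  calc ω ^ u * c < ω ^ u * ω := mul_lt_mul_of_pos_left hc (opow_pos u omega0_pos)
    _ = ω ^ (u + 1) := by rw [opow_add, opow_one]
    _ ≤ ω ^ w := by
        rw [Ordinal.add_one_eq_succ]
        exact Ordinal.opow_le_opow_right omega0_pos (Order.succ_le_of_lt huw)

theorem lt_eps_of {E u c v : Ordinal.{0}} (he : IsEpsilon E) (hu : u < E) (hc : c < ω)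
    (hv : v < E) : ω ^ u * c + v < E := by
  have hE : ω ^ E = E := he
  have h1 : ω ^ u * c < ω ^ E := _root_.opow_mul_lt_opow hc hu
  have h2 : v < ω ^ E := by rwa [hE]
  have h3 := Ordinal.principal_add_omega0_opow E h1 h2
  rwa [hE] at h3
section mono

variable {S : Set Ordinal.{0}} {f : Ordinal → Ordinal}

theorem subst_strictMono (hfE : ∀ e ∈ S, IsEpsilon (f e)) (hf : StrictMonoOn f S) :
    ∀ y x : Ordinal.{0}, Ep x ⊆ S → Ep y ⊆ S → x < y → subst f x < subst f y := by
  intro y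
  induction y using Ordinal.induction with
  | _ y IHy =>
  intro x
  induction x using Ordinal.induction with
  | _ x IHx =>
  intro hxS hyS hxy
  have hy0 : y ≠ 0 := (lt_of_le_of_lt (zero_le (a := x)) hxy).ne'
  rcases eq_or_ne x 0 with rfl | hx0
  · rw [subst_zero]
    exact subst_pos hfE hy0 hyS
  by_cases hye : ω ^ y = y
  · -- y epsilon
    have hyMem : y ∈ S := mem_S_of_eps hyS hye
    have hfy : IsEpsilon (f y) := hfE y hyMem
    rw [subst_eps f hye]
    by_cases hxe : ω ^ x = x
    · rw [subst_eps f hxe]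
      exact hf (mem_S_of_eps hxS hxe) hyMem hxy
    · have hax : Ordinal.log ω x < x := log_lt_self_of_noneps hxe hx0
      have hrx : x % ω ^ Ordinal.log ω x < x := Ordinal.mod_opow_log_lt_self ω hx0
      have hEa : Ep (Ordinal.log ω x) ⊆ S := (Ep_log_subset x).trans hxS
      have hEr : Ep (x % ω ^ Ordinal.log ω x) ⊆ S := (Ep_mod_subset x).trans hxS
      have h1 : subst f (Ordinal.log ω x) < f y := by
        have h := IHx _ hax hEa hyS (hax.trans hxy)
        rwa [subst_eps f hye] at h
      have h2 : subst f (x % ω ^ Ordinal.log ω x) < f y := by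
        have h := IHx _ hrx hEr hyS (hrx.trans hxy)
        rwa [subst_eps f hye] at h
      rw [subst_cons hfE hx0 hxS]
      exact lt_eps_of hfy h1 (Ordinal.div_opow_log_lt x one_lt_omega0) h2
  · -- y not epsilon
    have hby : Ordinal.log ω y < y := log_lt_self_of_noneps hye hy0
    have hEb : Ep (Ordinal.log ω y) ⊆ S := (Ep_log_subset y).trans hyS
    have hEt : Ep (y % ω ^ Ordinal.log ω y) ⊆ S := (Ep_mod_subset y).trans hyS
    have htb : y % ω ^ Ordinal.log ω y < ω ^ Ordinal.log ω y :=
      Ordinal.mod_lt y (opow_ne_zero _ omega0_ne_zero)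
    have hd0 : y / ω ^ Ordinal.log ω y ≠ 0 := (Ordinal.div_opow_log_pos ω hy0).ne'
    have hdpos : 0 < y / ω ^ Ordinal.log ω y := Ordinal.div_opow_log_pos ω hy0
    have hsy : subst f y = ω ^ subst f (Ordinal.log ω y) * (y / ω ^ Ordinal.log ω y)
        + subst f (y % ω ^ Ordinal.log ω y) := subst_cons hfE hy0 hyS
    have bound : ∀ p r' : Ordinal.{0}, Ep p ⊆ S → Ep r' ⊆ S → r' < ω ^ p → ω ^ p < y →
        subst f r' < ω ^ subst f p := by
      intro p r' hp hr' hlt hpy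
      have h := IHy _ hpy r' hr' ((Ep_opow_subset p).trans hp) hlt
      rwa [subst_opow hfE hp] at h
    by_cases hxe : ω ^ x = x
    · -- x epsilon
      have hxMem : x ∈ S := mem_S_of_eps hxS hxe
      have hlogx : Ordinal.log ω x = x := by
        conv_lhs => rw [← hxe]
        exact Ordinal.log_opow one_lt_omega0 x
      have hxb : x ≤ Ordinal.log ω y := by
        have h := Ordinal.log_mono_right ω hxy.le
        rwa [hlogx] at h
      rcases lt_or_eq_of_le hxb with hlt | heq
      · calc subst f x < subst f (Ordinal.log ω y) := IHy _ hby x hxS hEb hlt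
          _ ≤ ω ^ subst f (Ordinal.log ω y) := Ordinal.right_le_opow _ one_lt_omega0
          _ ≤ ω ^ subst f (Ordinal.log ω y) * (y / ω ^ Ordinal.log ω y) :=
              Ordinal.le_mul_left _ hdpos
          _ ≤ subst f y := by rw [hsy]; exact le_self_add
      · have hsb : subst f (Ordinal.log ω y) = f x := by rw [← heq, subst_eps f hxe]
        rw [subst_eps f hxe, hsy, hsb]
        have hfx : ω ^ f x = f x := hfE x hxMem
        rcases lt_or_eq_of_le (Ordinal.one_le_iff_ne_zero.2 hd0) with hd1 | hd1
        · calc f x = ω ^ f x * 1 := by rw [mul_one, hfx]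
            _ < ω ^ f x * (y / ω ^ Ordinal.log ω y) :=
                mul_lt_mul_of_pos_left hd1 (opow_pos _ omega0_pos)
            _ ≤ _ := le_self_add
        · -- d = 1
          have ht0 : y % ω ^ Ordinal.log ω y ≠ 0 := by
            intro h0
            have hyw : y = ω ^ Ordinal.log ω y := by
              conv_lhs => rw [← Ordinal.div_add_mod y (ω ^ Ordinal.log ω y)]
              rw [← hd1, mul_one, h0, add_zero]
            rw [hyw, ← heq, hxe] at hxy
            exact lt_irrefl x hxy
          have hpos : 0 < subst f (y % ω ^ Ordinal.log ω y) := subst_pos hfE ht0 hEt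
          calc f x = ω ^ f x * (y / ω ^ Ordinal.log ω y) + 0 := by
                rw [← hd1, mul_one, add_zero, hfx]
            _ < _ := add_lt_add_right hpos _
    · -- x not epsilon
      have hax : Ordinal.log ω x < x := log_lt_self_of_noneps hxe hx0
      have hEa : Ep (Ordinal.log ω x) ⊆ S := (Ep_log_subset x).trans hxS
      have hEr : Ep (x % ω ^ Ordinal.log ω x) ⊆ S := (Ep_mod_subset x).trans hxS
      have hra : x % ω ^ Ordinal.log ω x < ω ^ Ordinal.log ω x :=
        Ordinal.mod_lt x (opow_ne_zero _ omega0_ne_zero)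
      have hc0 : x / ω ^ Ordinal.log ω x ≠ 0 := (Ordinal.div_opow_log_pos ω hx0).ne'
      have hcw : x / ω ^ Ordinal.log ω x < ω := Ordinal.div_opow_log_lt x one_lt_omega0
      have hsx : subst f x = ω ^ subst f (Ordinal.log ω x) * (x / ω ^ Ordinal.log ω x)
          + subst f (x % ω ^ Ordinal.log ω x) := subst_cons hfE hx0 hxS
      have hab : Ordinal.log ω x ≤ Ordinal.log ω y := Ordinal.log_mono_right ω hxy.le
      have hwby : ω ^ Ordinal.log ω y ≤ y := Ordinal.opow_log_le_self ω hy0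
      rcases lt_or_eq_of_le hab with hlt | heq
      · -- log x < log y
        have hsab : subst f (Ordinal.log ω x) < subst f (Ordinal.log ω y) :=
          IHy _ hby _ hEa hEb hlt
        have hway : ω ^ Ordinal.log ω x < y :=
          lt_of_le_of_lt (Ordinal.opow_log_le_self ω hx0) hxy
        have hsr : subst f (x % ω ^ Ordinal.log ω x) < ω ^ subst f (Ordinal.log ω x) :=
          bound _ _ hEa hEr hra hway
        rw [hsx]
        calc ω ^ subst f (Ordinal.log ω x) * (x / ω ^ Ordinal.log ω x)
              + subst f (x % ω ^ Ordinal.log ω x) < ω ^ subst f (Ordinal.log ω y) :=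
            opow_mul_add_lt hcw hsr hsab
          _ ≤ ω ^ subst f (Ordinal.log ω y) * (y / ω ^ Ordinal.log ω y) :=
              Ordinal.le_mul_left _ hdpos
          _ ≤ subst f y := by rw [hsy]; exact le_self_add
      · -- log x = log y
        have h2 : y < ω ^ Ordinal.log ω y * Order.succ (y / ω ^ Ordinal.log ω y) := by
          conv_lhs => rw [← Ordinal.div_add_mod y (ω ^ Ordinal.log ω y)]
          exact Ordinal.opow_mul_add_lt_opow_mul htb (Order.lt_succ _)
        have hcd : x / ω ^ Ordinal.log ω x < Order.succ (y / ω ^ Ordinal.log ω y) := by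
          have h3 : ω ^ Ordinal.log ω y * (x / ω ^ Ordinal.log ω x)
              < ω ^ Ordinal.log ω y * Order.succ (y / ω ^ Ordinal.log ω y) := by
            calc ω ^ Ordinal.log ω y * (x / ω ^ Ordinal.log ω x)
                = ω ^ Ordinal.log ω x * (x / ω ^ Ordinal.log ω x) := by rw [heq]
              _ ≤ x := Ordinal.mul_div_le x _
              _ < y := hxy
              _ < _ := h2
          exact (mul_lt_mul_iff_right₀ (opow_pos _ omega0_pos)).1 h3
        rcases lt_or_eq_of_le (Order.lt_succ_iff.1 hcd) with hcd' | hcd'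
        · -- c < d
          have hwby' : ω ^ Ordinal.log ω y < y := by
            rcases lt_or_eq_of_le hwby with h | h
            · exact h
            · exfalso
              have hd1 : y / ω ^ Ordinal.log ω y = 1 := by
                rw [h, Ordinal.div_self hy0]
              rw [hd1] at hcd'
              exact hc0 (Ordinal.lt_one_iff_zero.1 hcd')
          have hsr : subst f (x % ω ^ Ordinal.log ω x) < ω ^ subst f (Ordinal.log ω x) :=
            bound _ _ hEa hEr hra (heq ▸ hwby')
          rw [hsx, hsy]
          calc ω ^ subst f (Ordinal.log ω x) * (x / ω ^ Ordinal.log ω x)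
                + subst f (x % ω ^ Ordinal.log ω x)
              < ω ^ subst f (Ordinal.log ω x) * Order.succ (x / ω ^ Ordinal.log ω x) :=
              Ordinal.opow_mul_add_lt_opow_mul hsr (Order.lt_succ _)
            _ ≤ ω ^ subst f (Ordinal.log ω x) * (y / ω ^ Ordinal.log ω y) :=
                mul_le_mul_right (Order.succ_le_of_lt hcd') _
            _ = ω ^ subst f (Ordinal.log ω y) * (y / ω ^ Ordinal.log ω y) := by rw [heq]
            _ ≤ _ := le_self_add
        · -- c = d, compare remainders
          have hrt : x % ω ^ Ordinal.log ω x < y % ω ^ Ordinal.log ω y := by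
            have key : ω ^ Ordinal.log ω y * (y / ω ^ Ordinal.log ω y)
                  + x % ω ^ Ordinal.log ω x
                < ω ^ Ordinal.log ω y * (y / ω ^ Ordinal.log ω y)
                  + y % ω ^ Ordinal.log ω y := by
              calc ω ^ Ordinal.log ω y * (y / ω ^ Ordinal.log ω y) + x % ω ^ Ordinal.log ω x
                  = ω ^ Ordinal.log ω x * (x / ω ^ Ordinal.log ω x)
                    + x % ω ^ Ordinal.log ω x := by rw [hcd', heq]
                _ = x := Ordinal.div_add_mod x _
                _ < y := hxy
                _ = _ := (Ordinal.div_add_mod y _).symm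
            exact (add_lt_add_iff_left _).1 key
          have hty : y % ω ^ Ordinal.log ω y < y := Ordinal.mod_opow_log_lt_self ω hy0
          have hst : subst f (x % ω ^ Ordinal.log ω x) < subst f (y % ω ^ Ordinal.log ω y) :=
            IHy _ hty _ hEr hEt hrt
          have hsleq : subst f (Ordinal.log ω x) = subst f (Ordinal.log ω y) := by rw [heq]
          rw [hsx, hsy, hsleq, hcd']
          exact add_lt_add_right hst _

theorem subst_lt_opow_subst (hfE : ∀ e ∈ S, IsEpsilon (f e)) (hf : StrictMonoOn f S)
    {a r : Ordinal.{0}} (hr : r < ω ^ a) (hEr : Ep r ⊆ S) (hEa : Ep a ⊆ S) :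
    subst f r < ω ^ subst f a := by
  have h := subst_strictMono hfE hf (ω ^ a) r hEr ((Ep_opow_subset a).trans hEa) hr
  rwa [subst_opow hfE hEa] at h

end mono
theorem add_same_exp {a c r d t : Ordinal.{0}} (hr : r < ω ^ a) (hd : d ≠ 0) :
    (ω ^ a * c + r) + (ω ^ a * d + t) = ω ^ a * (c + d) + t := by
  have h1 : r + (ω ^ a * d + t) = ω ^ a * d + t :=
    Ordinal.add_absorp hr (le_trans (Ordinal.le_mul_left _ (pos_iff_ne_zero.2 hd))
      (le_self_add))
  rw [add_assoc, h1, ← add_assoc, ← mul_add]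

section addthm

variable {S : Set Ordinal.{0}} {f : Ordinal → Ordinal}

theorem subst_add (hfE : ∀ e ∈ S, IsEpsilon (f e)) (hf : StrictMonoOn f S) :
    ∀ u v : Ordinal.{0}, Ep u ⊆ S → Ep v ⊆ S →
      Ep (u + v) ⊆ S ∧ subst f (u + v) = subst f u + subst f v := by
  intro u
  induction u using Ordinal.induction with
  | _ u IH =>
  intro v hu hv
  rcases eq_or_ne u 0 with rfl | hu0
  · rw [zero_add, subst_zero, zero_add]
    exact ⟨hv, rfl⟩
  rcases eq_or_ne v 0 with rfl | hv0
  · rw [add_zero, subst_zero, add_zero]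
    exact ⟨hu, rfl⟩
  have hdxu : ω ^ Ordinal.log ω u * (u / ω ^ Ordinal.log ω u) + u % ω ^ Ordinal.log ω u = u :=
    Ordinal.div_add_mod u _
  have hdxv : ω ^ Ordinal.log ω v * (v / ω ^ Ordinal.log ω v) + v % ω ^ Ordinal.log ω v = v :=
    Ordinal.div_add_mod v _
  have hc0 : u / ω ^ Ordinal.log ω u ≠ 0 := (Ordinal.div_opow_log_pos ω hu0).ne'
  have hcw : u / ω ^ Ordinal.log ω u < ω := Ordinal.div_opow_log_lt u one_lt_omega0
  have hra : u % ω ^ Ordinal.log ω u < ω ^ Ordinal.log ω u :=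
    Ordinal.mod_lt u (opow_ne_zero _ omega0_ne_zero)
  have hEa : Ep (Ordinal.log ω u) ⊆ S := (Ep_log_subset u).trans hu
  have hEr : Ep (u % ω ^ Ordinal.log ω u) ⊆ S := (Ep_mod_subset u).trans hu
  have hd0 : v / ω ^ Ordinal.log ω v ≠ 0 := (Ordinal.div_opow_log_pos ω hv0).ne'
  have hdw : v / ω ^ Ordinal.log ω v < ω := Ordinal.div_opow_log_lt v one_lt_omega0
  have htb : v % ω ^ Ordinal.log ω v < ω ^ Ordinal.log ω v :=
    Ordinal.mod_lt v (opow_ne_zero _ omega0_ne_zero)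
  have hEb : Ep (Ordinal.log ω v) ⊆ S := (Ep_log_subset v).trans hv
  have hEt : Ep (v % ω ^ Ordinal.log ω v) ⊆ S := (Ep_mod_subset v).trans hv
  rcases lt_trichotomy (Ordinal.log ω u) (Ordinal.log ω v) with hab | hab | hab
  · -- log u < log v : absorption
    have huv : u < ω ^ Ordinal.log ω v := by
      calc u < ω ^ Order.succ (Ordinal.log ω u) := Ordinal.lt_opow_succ_log_self one_lt_omega0 u
        _ ≤ ω ^ Ordinal.log ω v :=
            Ordinal.opow_le_opow_right omega0_pos (Order.succ_le_of_lt hab)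
    have habs : u + v = v := Ordinal.add_absorp huv (Ordinal.opow_log_le_self ω hv0)
    have hsu : subst f u < ω ^ subst f (Ordinal.log ω v) := subst_lt_opow_subst hfE hf huv hu hEb
    have hsabs : subst f u + subst f v = subst f v := by
      apply Ordinal.add_absorp hsu
      calc ω ^ subst f (Ordinal.log ω v)
          ≤ ω ^ subst f (Ordinal.log ω v) * (v / ω ^ Ordinal.log ω v) :=
            Ordinal.le_mul_left _ (Ordinal.div_opow_log_pos ω hv0)
        _ ≤ subst f v := by rw [subst_cons hfE hv0 hv]; exact le_self_add
    rw [habs, hsabs]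
    exact ⟨hv, rfl⟩
  · -- log u = log v
    have hra' : u % ω ^ Ordinal.log ω v < ω ^ Ordinal.log ω v := hab ▸ hra
    have hEr' : Ep (u % ω ^ Ordinal.log ω v) ⊆ S := hab ▸ hEr
    have hc0' : u / ω ^ Ordinal.log ω v ≠ 0 := hab ▸ hc0
    have hcw' : u / ω ^ Ordinal.log ω v < ω := hab ▸ hcw
    have e1 : u + v = ω ^ Ordinal.log ω v
        * (u / ω ^ Ordinal.log ω v + v / ω ^ Ordinal.log ω v) + v % ω ^ Ordinal.log ω v := by
      conv_lhs => rw [← hdxu, ← hdxv, hab]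
      exact add_same_exp hra' hd0
    have hcc0 : u / ω ^ Ordinal.log ω v + v / ω ^ Ordinal.log ω v ≠ 0 := by
      intro h0
      exact hd0 (right_eq_zero_of_add_eq_zero h0)
    have hccw : u / ω ^ Ordinal.log ω v + v / ω ^ Ordinal.log ω v < ω :=
      Ordinal.principal_add_omega0 hcw' hdw
    constructor
    · rw [e1, Ep_decomp hcc0 hccw htb]
      exact Set.union_subset hEb hEt
    · rw [e1, subst_decomp hfE hcc0 hccw htb hEb hEt]
      have hsu : subst f u = ω ^ subst f (Ordinal.log ω v) * (u / ω ^ Ordinal.log ω v)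
          + subst f (u % ω ^ Ordinal.log ω v) := by
        have h := subst_cons hfE hu0 hu
        rwa [hab] at h
      rw [hsu, subst_cons hfE hv0 hv]
      exact (add_same_exp (subst_lt_opow_subst hfE hf hra' hEr' hEb) hd0).symm
  · -- log v < log u
    have hva : v < ω ^ Ordinal.log ω u := by
      calc v < ω ^ Order.succ (Ordinal.log ω v) := Ordinal.lt_opow_succ_log_self one_lt_omega0 v
        _ ≤ ω ^ Ordinal.log ω u :=
            Ordinal.opow_le_opow_right omega0_pos (Order.succ_le_of_lt hab)
    obtain ⟨hErv, hsrv⟩ := IH (u % ω ^ Ordinal.log ω u) (Ordinal.mod_opow_log_lt_self ω hu0)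
      v hEr hv
    have hrva : u % ω ^ Ordinal.log ω u + v < ω ^ Ordinal.log ω u :=
      Ordinal.principal_add_omega0_opow _ hra hva
    have e1 : u + v = ω ^ Ordinal.log ω u * (u / ω ^ Ordinal.log ω u)
        + (u % ω ^ Ordinal.log ω u + v) := by
      conv_lhs => rw [← hdxu]
      rw [add_assoc]
    constructor
    · rw [e1, Ep_decomp hc0 hcw hrva]
      exact Set.union_subset hEa hErv
    · rw [e1, subst_decomp hfE hc0 hcw hrva hEa hErv, hsrv, subst_cons hfE hu0 hu]
      exact (add_assoc _ _ _).symm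

end addthm
theorem mul_nat_aux {a c r : Ordinal.{0}} (hr : r < ω ^ a) (hc : c ≠ 0) (n : ℕ) :
    (ω ^ a * c + r) * ((n : Ordinal.{0}) + 1) = ω ^ a * (c * ((n : Ordinal.{0}) + 1)) + r := by
  induction n with
  | zero => simp
  | succ n IHn =>
    have hcast : ((n + 1 : ℕ) : Ordinal.{0}) = ((n : ℕ) : Ordinal.{0}) + 1 := by push_cast; rfl
    rw [hcast, mul_add, mul_one, IHn, add_same_exp hr hc]
    conv_rhs => rw [mul_add, mul_one]

theorem mul_nat {a c r d : Ordinal.{0}} (hr : r < ω ^ a) (hc : c ≠ 0) (hd : d ≠ 0)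
    (hdw : d < ω) : (ω ^ a * c + r) * d = ω ^ a * (c * d) + r := by
  obtain ⟨n, rfl⟩ := Ordinal.lt_omega0.1 hdw
  obtain ⟨m, rfl⟩ : ∃ m, n = m + 1 :=
    Nat.exists_eq_succ_of_ne_zero (by simpa using hd)
  have hcast : ((m + 1 : ℕ) : Ordinal.{0}) = ((m : ℕ) : Ordinal.{0}) + 1 := by push_cast; rfl
  rw [hcast]
  exact mul_nat_aux hr hc m

theorem mul_omega_opow {a c r b : Ordinal.{0}} (hr : r < ω ^ a) (hc : c ≠ 0) (hcw : c < ω)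
    (hb : b ≠ 0) : (ω ^ a * c + r) * ω ^ b = ω ^ (a + b) := by
  have h1 : (ω ^ a * c + r) * ω = ω ^ (a + 1) := by
    apply _root_.le_antisymm
    · calc (ω ^ a * c + r) * ω ≤ ω ^ a * Order.succ c * ω :=
          mul_le_mul_left (Ordinal.opow_mul_add_lt_opow_mul hr (Order.lt_succ c)).le ω
        _ = ω ^ a * (Order.succ c * ω) := mul_assoc _ _ _
        _ = ω ^ a * ω := by
            rw [Ordinal.mul_omega0 (lt_of_lt_of_le (pos_iff_ne_zero.2 hc) (Order.le_succ c))
              (isSuccLimit_omega0.succ_lt hcw)]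
        _ = ω ^ (a + 1) := by rw [opow_add, opow_one]
    · calc ω ^ (a + 1) = ω ^ a * ω := by rw [opow_add, opow_one]
        _ ≤ (ω ^ a * c + r) * ω :=
            mul_le_mul_left (le_trans (Ordinal.le_mul_left _ (pos_iff_ne_zero.2 hc))
              (le_self_add)) ω
  have hb1 : 1 + (b - 1) = b := Ordinal.add_sub_cancel_of_le (Ordinal.one_le_iff_ne_zero.2 hb)
  conv_lhs => rw [← hb1]
  rw [opow_add, opow_one, ← mul_assoc, h1, ← opow_add, add_assoc, hb1]

theorem mul_step {a c r b d t : Ordinal.{0}} (hr : r < ω ^ a) (hc : c ≠ 0) (hcw : c < ω)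
    (hb : b ≠ 0) :
    (ω ^ a * c + r) * (ω ^ b * d + t) = ω ^ (a + b) * d + (ω ^ a * c + r) * t := by
  rw [mul_add, ← mul_assoc, mul_omega_opow hr hc hcw hb]
theorem stmt10 (S : Set Ordinal.{0}) (f : Ordinal → Ordinal)
    (hS : ∀ e ∈ S, IsEpsilon e) (hfE : ∀ e ∈ S, IsEpsilon (f e))
    (hf : StrictMonoOn f S)
    (x y : Ordinal) (hx : Ep x ⊆ S) (hy : Ep y ⊆ S) :
    Ep (x * y) ⊆ S ∧ subst f (x * y) = subst f x * subst f y := by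
  revert hy
  induction y using Ordinal.induction with
  | _ y IH =>
  intro hy
  rcases eq_or_ne x 0 with rfl | hx0
  · rw [zero_mul, subst_zero, zero_mul]
    exact ⟨by rw [Ep_zero]; exact Set.empty_subset S, rfl⟩
  rcases eq_or_ne y 0 with rfl | hy0
  · rw [mul_zero, subst_zero, mul_zero]
    exact ⟨by rw [Ep_zero]; exact Set.empty_subset S, rfl⟩
  have hdxu : ω ^ Ordinal.log ω x * (x / ω ^ Ordinal.log ω x) + x % ω ^ Ordinal.log ω x = x :=
    Ordinal.div_add_mod x _
  have hc0 : x / ω ^ Ordinal.log ω x ≠ 0 := (Ordinal.div_opow_log_pos ω hx0).ne'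
  have hcw : x / ω ^ Ordinal.log ω x < ω := Ordinal.div_opow_log_lt x one_lt_omega0
  have hra : x % ω ^ Ordinal.log ω x < ω ^ Ordinal.log ω x :=
    Ordinal.mod_lt x (opow_ne_zero _ omega0_ne_zero)
  have hEa : Ep (Ordinal.log ω x) ⊆ S := (Ep_log_subset x).trans hx
  have hEr : Ep (x % ω ^ Ordinal.log ω x) ⊆ S := (Ep_mod_subset x).trans hx
  have hsr : subst f (x % ω ^ Ordinal.log ω x) < ω ^ subst f (Ordinal.log ω x) :=
    subst_lt_opow_subst hfE hf hra hEr hEa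
  have hsx : subst f x = ω ^ subst f (Ordinal.log ω x) * (x / ω ^ Ordinal.log ω x)
      + subst f (x % ω ^ Ordinal.log ω x) := subst_cons hfE hx0 hx
  by_cases hyw : y < ω
  · -- finite y
    have hmul : x * y = ω ^ Ordinal.log ω x * (x / ω ^ Ordinal.log ω x * y)
        + x % ω ^ Ordinal.log ω x := by
      conv_lhs => rw [← hdxu]
      exact mul_nat hra hc0 hy0 hyw
    have hcy0 : x / ω ^ Ordinal.log ω x * y ≠ 0 := mul_ne_zero hc0 hy0
    have hcyw : x / ω ^ Ordinal.log ω x * y < ω := Ordinal.principal_mul_omega0 hcw hyw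
    constructor
    · rw [hmul, Ep_decomp hcy0 hcyw hra]
      exact Set.union_subset hEa hEr
    · rw [hmul, subst_decomp hfE hcy0 hcyw hra hEa hEr, hsx, subst_nat hfE hy0 hyw]
      exact (mul_nat hsr hc0 hy0 hyw).symm
  · -- infinite y
    have hb0 : Ordinal.log ω y ≠ 0 := by
      intro h0
      apply hyw
      have h := Ordinal.lt_opow_succ_log_self one_lt_omega0 y
      rwa [h0, Ordinal.succ_zero, opow_one] at h
    have hdy : ω ^ Ordinal.log ω y * (y / ω ^ Ordinal.log ω y) + y % ω ^ Ordinal.log ω y = y :=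
      Ordinal.div_add_mod y _
    have hd0 : y / ω ^ Ordinal.log ω y ≠ 0 := (Ordinal.div_opow_log_pos ω hy0).ne'
    have hdw : y / ω ^ Ordinal.log ω y < ω := Ordinal.div_opow_log_lt y one_lt_omega0
    have htb : y % ω ^ Ordinal.log ω y < ω ^ Ordinal.log ω y :=
      Ordinal.mod_lt y (opow_ne_zero _ omega0_ne_zero)
    have hEb : Ep (Ordinal.log ω y) ⊆ S := (Ep_log_subset y).trans hy
    have hEt : Ep (y % ω ^ Ordinal.log ω y) ⊆ S := (Ep_mod_subset y).trans hy
    obtain ⟨hEpt, hst⟩ := IH (y % ω ^ Ordinal.log ω y) (Ordinal.mod_opow_log_lt_self ω hy0) hEt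
    have hxt : x * (y % ω ^ Ordinal.log ω y) < ω ^ (Ordinal.log ω x + Ordinal.log ω y) := by
      calc x * (y % ω ^ Ordinal.log ω y) < x * ω ^ Ordinal.log ω y :=
          mul_lt_mul_of_pos_left htb (pos_iff_ne_zero.2 hx0)
        _ = ω ^ (Ordinal.log ω x + Ordinal.log ω y) := by
            conv_lhs => rw [← hdxu]
            exact mul_omega_opow hra hc0 hcw hb0
    have hmul : x * y = ω ^ (Ordinal.log ω x + Ordinal.log ω y) * (y / ω ^ Ordinal.log ω y)
        + x * (y % ω ^ Ordinal.log ω y) := by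
      conv_lhs => rw [← hdy, ← hdxu]
      rw [mul_step hra hc0 hcw hb0, hdxu]
    obtain ⟨hEab, hsab⟩ := subst_add hfE hf (Ordinal.log ω x) (Ordinal.log ω y) hEa hEb
    have hsb0 : subst f (Ordinal.log ω y) ≠ 0 := (subst_pos hfE hb0 hEb).ne'
    constructor
    · rw [hmul, Ep_decomp hd0 hdw hxt]
      exact Set.union_subset hEab hEpt
    · rw [hmul, subst_decomp hfE hd0 hdw hxt hEab hEpt, hsab, hst,
        subst_cons hfE hy0 hy, hsx]
      exact (mul_step hsr hc0 hcw hsb0).symm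
end

section
/- Let f : S → E be a strictly increasing function from a set of epsilon numbers into the epsilon numbers, and let x be an ordinal with Ep(x) ⊆ S. If x is a limit ordinal, then x[f] is a limit ordinal. -/
open Ordinal

-- auxiliary lemmas
lemma map_attach_subst (f : Ordinal → Ordinal) (x : Ordinal) :
    ((CNF ω x).attach.map (fun p => ω ^ subst f p.1.1 * p.1.2)) =
      (CNF ω x).map (fun q => ω ^ subst f q.1 * q.2) :=
  List.attach_map_val (l := CNF ω x) (f := fun q => ω ^ subst f q.1 * q.2)

lemma Ep_self_mem {x : Ordinal.{0}} (h : ω ^ x = x) : x ∈ Ep x := by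
  rw [Ep, dif_pos h]; exact Set.mem_singleton x

lemma Ep_subset {x : Ordinal.{0}} (h : ¬ ω ^ x = x) {q : Ordinal × Ordinal}
    (hq : q ∈ CNF ω x) : Ep q.1 ⊆ Ep x := by
  intro a ha
  rw [Ep, dif_neg h]
  revert ha
  revert a
  exact Set.subset_iUnion (fun p : {q // q ∈ CNF ω x} => Ep p.1.1) ⟨q, hq⟩

lemma foldr_eq_sum (c : Ordinal) (l : List (Ordinal × Ordinal)) :
    l.foldr (fun p r => ω ^ p.1 * p.2 + r) c
      = (l.map (fun p => ω ^ p.1 * p.2)).sum + c := by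
  induction l with
  | nil => simp
  | cons a l ih => simp [ih, add_assoc]

lemma subst_pos_s12 (f : Ordinal → Ordinal) (x : Ordinal)
    (hf0 : ∀ e ∈ Ep x, 0 < f e) (hx : x ≠ 0) : 0 < subst f x := by
  by_cases h : ω ^ x = x
  · rw [subst, dif_pos h]; exact hf0 x (Ep_self_mem h)
  · rw [subst, dif_neg h]
    rw [map_attach_subst]
    have hl := Ordinal.CNF.ne_zero (b := ω) hx
    rw [hl, List.map_cons, List.sum_cons]
    refine lt_of_lt_of_le (mul_pos (opow_pos _ omega0_pos) ?_) le_self_add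
    exact Ordinal.CNF.snd_pos (hl ▸ List.mem_cons_self)

theorem stmt12 (S : Set Ordinal.{0}) (f : Ordinal → Ordinal)
    (hS : ∀ e ∈ S, IsEpsilon e) (hfE : ∀ e ∈ S, IsEpsilon (f e))
    (hf : StrictMonoOn f S)
    (x : Ordinal) (hx : Ep x ⊆ S) (hlim : Order.IsSuccLimit x) :
    Order.IsSuccLimit (subst f x) := by
  have hfpos : ∀ e ∈ Ep x, 0 < f e := by
    intro e he
    have h1 := hfE e (hx he)
    rw [pos_iff_ne_zero]
    intro h0
    rw [h0] at h1
    simp [IsEpsilon] at h1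
  by_cases h : ω ^ x = x
  · rw [subst, dif_pos h]
    have hE : IsEpsilon (f x) := hfE x (hx (Ep_self_mem h))
    have hne : f x ≠ 0 := (hfpos x (Ep_self_mem h)).ne'
    rw [← hE]
    exact isSuccLimit_opow_left isSuccLimit_omega0 hne
  · rw [subst, dif_neg h, map_attach_subst]
    obtain hnil | ⟨l, q, hlq⟩ := (CNF ω x).eq_nil_or_concat
    · exfalso
      have hfold := Ordinal.CNF.foldr ω x
      rw [hnil] at hfold
      exact hlim.pos.ne' hfold.symm
    rw [List.concat_eq_append] at hlq
    have hq : q ∈ CNF ω x := by rw [hlq]; simp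
    have hq1 : q.1 ≠ 0 := by
      intro h0
      have hfold := Ordinal.CNF.foldr ω x
      rw [hlq, List.foldr_append] at hfold
      simp only [List.foldr_cons, List.foldr_nil, h0, opow_zero, one_mul, add_zero] at hfold
      rw [foldr_eq_sum] at hfold
      obtain ⟨n, hn⟩ := Ordinal.lt_omega0.1 (Ordinal.CNF.snd_lt one_lt_omega0 hq)
      have hpos : 0 < q.2 := Ordinal.CNF.snd_pos hq
      rw [hn] at hfold hpos
      obtain ⟨m, rfl⟩ := Nat.exists_eq_succ_of_ne_zero (by exact_mod_cast hpos.ne')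
      rw [Nat.cast_succ, ← add_assoc] at hfold
      have h1 : _ + (m : Ordinal) < x := hfold ▸ lt_of_lt_of_le (lt_add_one _) le_rfl
      have h2 := hlim.succ_lt h1
      rw [Ordinal.add_one_eq_succ] at hfold
      rw [hfold] at h2
      exact lt_irrefl _ h2
    rw [hlq, List.map_append, List.sum_append, List.map_singleton, List.sum_singleton]
    apply Ordinal.isSuccLimit_add
    apply isSuccLimit_mul_left
    · refine isSuccLimit_opow_left isSuccLimit_omega0 ?_
      exact (subst_pos_s12 f q.1 (fun e he => hfpos e (Ep_subset h hq he)) hq1).ne'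
    · exact Ordinal.CNF.snd_pos hq
end
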